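/- Shannon entropy is asymptotically continuous: for probability distributions P, P' on a finite set S, if (1/2)‖P − P'‖₁ ≤ ε ≤ 1, then |H(P) − H(P')| ≤ ε·log|S| + h(ε), where h is the binary entropy function. -/

import Mathlib

open scoped BigOperators

/-- A probability distribution on a finite type. -/
def IsProbDist {A : Type} [Fintype A] (p : A → ℝ) : Prop :=
  (∀ x, 0 ≤ p x) ∧ ∑ x, p x = 1

/-- Shannon mutual information `I(A;B)` of a joint distribution on `A × B`. -/
noncomputable def mi2 {A B : Type} [Fintype A] [Fintype B] (p : A × B → ℝ) : ℝ :=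
  ∑ a, ∑ b, p (a, b) * Real.log (p (a, b) / ((∑ b', p (a, b')) * (∑ a', p (a', b))))

/-- Conditional mutual information `I(A;B|C)` of a joint distribution on `A × B × C`. -/
noncomputable def cmi3 {A B C : Type} [Fintype A] [Fintype B] [Fintype C]
    (p : A × B × C → ℝ) : ℝ :=
  ∑ a, ∑ b, ∑ c, p (a, b, c) *
    Real.log ((p (a, b, c) * (∑ a', ∑ b', p (a', b', c))) /
      ((∑ b', p (a, b', c)) * (∑ a', p (a', b, c))))

/-- Marginal distribution of `(S,Y)`. -/
noncomputable def margSY {S Y Z : Type} [Fintype S] [Fintype Y] [Fintype Z]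
    (p : S × Y × Z → ℝ) : S × Y → ℝ := fun x => ∑ z, p (x.1, x.2, z)

/-- Marginal distribution of `(S,Z)`. -/
noncomputable def margSZ {S Y Z : Type} [Fintype S] [Fintype Y] [Fintype Z]
    (p : S × Y × Z → ℝ) : S × Z → ℝ := fun x => ∑ y, p (x.1, y, x.2)

/-- `I(S;Y)`. -/
noncomputable def ISY {S Y Z : Type} [Fintype S] [Fintype Y] [Fintype Z]
    (p : S × Y × Z → ℝ) : ℝ := mi2 (margSY p)

/-- `I(S;Z)`. -/
noncomputable def ISZ {S Y Z : Type} [Fintype S] [Fintype Y] [Fintype Z]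
    (p : S × Y × Z → ℝ) : ℝ := mi2 (margSZ p)

/-- `I(S;YZ)`, the mutual information of `S` with the pair `(Y,Z)`. -/
noncomputable def ISYZ {S Y Z : Type} [Fintype S] [Fintype Y] [Fintype Z]
    (p : S × Y × Z → ℝ) : ℝ := mi2 p

/-- `I(S;Y|Z)`. -/
noncomputable def ISYgZ {S Y Z : Type} [Fintype S] [Fintype Y] [Fintype Z]
    (p : S × Y × Z → ℝ) : ℝ := cmi3 p

/-- The same joint distribution, with the roles of `Y` and `Z` exchanged. -/
def swapYZ {S Y Z : Type} (p : S × Y × Z → ℝ) : S × Z × Y → ℝ :=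
  fun x => p (x.1, x.2.2, x.2.1)

/-- `I(S;Z|Y)`. -/
noncomputable def ISZgY {S Y Z : Type} [Fintype S] [Fintype Y] [Fintype Z]
    (p : S × Y × Z → ℝ) : ℝ := ISYgZ (swapYZ p)

/-- The joint distribution of two independent triples, grouped componentwise. -/
def prodDist {S1 Y1 Z1 S2 Y2 Z2 : Type}
    (p1 : S1 × Y1 × Z1 → ℝ) (p2 : S2 × Y2 × Z2 → ℝ) :
    (S1 × S2) × (Y1 × Y2) × (Z1 × Z2) → ℝ :=
  fun x => p1 (x.1.1, x.2.1.1, x.2.2.1) * p2 (x.1.2, x.2.1.2, x.2.2.2)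

/-- Shannon entropy of a distribution on a finite type. -/
noncomputable def ent {A : Type} [Fintype A] (p : A → ℝ) : ℝ :=
  ∑ a, Real.negMulLog (p a)

/-- The binary entropy function `h(ε) = −ε log ε − (1−ε) log (1−ε)`. -/
noncomputable def binEnt (ε : ℝ) : ℝ :=
  Real.negMulLog ε + Real.negMulLog (1 - ε)


section AuxEntropy

open Real Finset

lemma eta_subadd {x y : ℝ} (hx : 0 ≤ x) (hy : 0 ≤ y) :
    negMulLog (x + y) ≤ negMulLog x + negMulLog y := by
  rcases hx.eq_or_lt with h | hx'
  · simp [← h]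
  rcases hy.eq_or_lt with h | hy'
  · simp [← h]
  have h1 : Real.log x ≤ Real.log (x + y) := Real.log_le_log hx' (by linarith)
  have h2 : Real.log y ≤ Real.log (x + y) := Real.log_le_log hy' (by linarith)
  simp only [negMulLog, neg_mul]
  nlinarith

lemma eta_term_le {x d : ℝ} (hx : 0 ≤ x) (hd : 1 ≤ d) :
    negMulLog x ≤ x * Real.log d + (1 / d - x) := by
  have hd0 : 0 < d := by linarith
  rcases hx.eq_or_lt with h | hx'
  · rw [← h]; simp only [negMulLog_zero, zero_mul, sub_zero, zero_add]; positivity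
  have h := Real.log_le_sub_one_of_pos (show 0 < 1 / (d * x) by positivity)
  have hl : Real.log (1 / (d * x)) = -(Real.log d + Real.log x) := by
    rw [one_div, Real.log_inv, Real.log_mul (ne_of_gt hd0) (ne_of_gt hx')]
  rw [hl] at h
  have := mul_le_mul_of_nonneg_left h hx
  simp only [negMulLog, neg_mul]
  have hx0 : x * (1 / (d * x) - 1) = 1 / d - x := by field_simp
  nlinarith

lemma card_pos_of_prob {A : Type} [Fintype A] {p : A → ℝ} (hp : IsProbDist p) :
    1 ≤ (Fintype.card A : ℝ) := by
  have : Nonempty A := by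
    by_contra h
    have : IsEmpty A := not_nonempty_iff.mp h
    have := hp.2
    simp [Finset.univ_eq_empty] at this
  have : 1 ≤ Fintype.card A := Fintype.card_pos
  exact_mod_cast this

lemma prob_le_one {A : Type} [Fintype A] {p : A → ℝ} (hp : IsProbDist p) (a : A) :
    p a ≤ 1 := by
  have h := Finset.single_le_sum (f := p) (fun i _ => hp.1 i) (Finset.mem_univ a)
  rw [hp.2] at h
  exact h

lemma ent_nonneg {A : Type} [Fintype A] {p : A → ℝ} (hp : IsProbDist p) : 0 ≤ ent p :=
  Finset.sum_nonneg fun a _ => negMulLog_nonneg (hp.1 a) (prob_le_one hp a)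

lemma ent_le_log_card {A : Type} [Fintype A] {p : A → ℝ} (hp : IsProbDist p) :
    ent p ≤ Real.log (Fintype.card A) := by
  have hd : 1 ≤ (Fintype.card A : ℝ) := card_pos_of_prob hp
  have hd0 : (0 : ℝ) < Fintype.card A := by linarith
  calc ent p ≤ ∑ a, (p a * Real.log (Fintype.card A) + (1 / (Fintype.card A : ℝ) - p a)) :=
        Finset.sum_le_sum fun a _ => eta_term_le (hp.1 a) hd
    _ = Real.log (Fintype.card A) := by
        rw [Finset.sum_add_distrib, ← Finset.sum_mul, hp.2, Finset.sum_sub_distrib, hp.2]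
        simp [Finset.sum_const, Finset.card_univ]
        field_simp
        ring

lemma binEnt_nonneg {t : ℝ} (h0 : 0 ≤ t) (h1 : t ≤ 1) : 0 ≤ binEnt t :=
  add_nonneg (negMulLog_nonneg h0 h1) (negMulLog_nonneg (by linarith) (by linarith))

/-- One-sided Fannes-type bound with `t` equal to the total variation distance. -/
lemma fannes_one_sided {A : Type} [Fintype A] (p p' : A → ℝ)
    (hp : IsProbDist p) (hp' : IsProbDist p') (t : ℝ)
    (ht : t = (1 / 2) * ∑ a, |p a - p' a|) :
    ent p - ent p' ≤ t * Real.log (Fintype.card A) + binEnt t := by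
  have hd : 1 ≤ (Fintype.card A : ℝ) := card_pos_of_prob hp
  have hlogd : 0 ≤ Real.log (Fintype.card A) := Real.log_nonneg hd
  set m : A → ℝ := fun a => min (p a) (p' a) with hm
  have hsumabs : ∑ a, |p a - p' a| = 2 * t := by rw [ht]; ring
  have hmpt : ∀ a, m a = (p a + p' a - |p a - p' a|) / 2 := by
    intro a
    rcases le_total (p a) (p' a) with h | h
    · rw [hm]; simp only [min_eq_left h, abs_of_nonpos (by linarith : p a - p' a ≤ 0)]; ring
    · rw [hm]; simp only [min_eq_right h, abs_of_nonneg (by linarith : 0 ≤ p a - p' a)]; ring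
  have hmsum : ∑ a, m a = 1 - t := by
    calc ∑ a, m a = ∑ a, (p a + p' a - |p a - p' a|) / 2 := Finset.sum_congr rfl fun a _ => hmpt a
      _ = ((∑ a, p a) + (∑ a, p' a) - ∑ a, |p a - p' a|) / 2 := by
          rw [← Finset.sum_div, Finset.sum_sub_distrib, Finset.sum_add_distrib]
      _ = 1 - t := by rw [hp.2, hp'.2, hsumabs]; ring
  have hmnn : ∀ a, 0 ≤ m a := fun a => le_min (hp.1 a) (hp'.1 a)
  have ht0 : 0 ≤ t := by
    rw [ht]
    have : 0 ≤ ∑ a, |p a - p' a| := Finset.sum_nonneg fun a _ => abs_nonneg _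
    linarith
  have ht1 : t ≤ 1 := by
    have : 0 ≤ ∑ a, m a := Finset.sum_nonneg fun a _ => hmnn a
    linarith [hmsum]
  rcases ht0.eq_or_lt with h0 | h0
  · -- t = 0 : p = p'
    have : ∑ a, |p a - p' a| = 0 := by rw [hsumabs, ← h0]; ring
    have hpp : ∀ a, p a = p' a := by
      intro a
      have := (Finset.sum_eq_zero_iff_of_nonneg (fun a _ => abs_nonneg (p a - p' a))).mp this
        a (Finset.mem_univ a)
      have := abs_eq_zero.mp this
      linarith
    have : ent p = ent p' := Finset.sum_congr rfl fun a _ => by rw [hpp a]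
    rw [this, ← h0]
    simp only [sub_self, zero_mul, zero_add]
    exact binEnt_nonneg le_rfl zero_le_one
  rcases ht1.eq_or_lt with h1 | h1
  · -- t = 1 : use trivial bounds
    have hb : binEnt t = 0 := by rw [h1]; simp [binEnt]
    rw [hb, h1, one_mul, add_zero]
    linarith [ent_le_log_card hp, ent_nonneg hp']
  -- main case 0 < t < 1
  have h1t : 0 < 1 - t := by linarith
  set u : A → ℝ := fun a => (p a - m a) / t with hu
  set v : A → ℝ := fun a => (p' a - m a) / t with hv
  set w : A → ℝ := fun a => m a / (1 - t) with hw
  have hunn : ∀ a, 0 ≤ u a := fun a => div_nonneg (by simp [hm, min_le_left]) (le_of_lt h0)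
  have hvnn : ∀ a, 0 ≤ v a := fun a => div_nonneg (by simp [hm, min_le_right]) (le_of_lt h0)
  have hwnn : ∀ a, 0 ≤ w a := fun a => div_nonneg (hmnn a) (le_of_lt h1t)
  have husum : ∑ a, u a = 1 := by
    rw [hu]
    simp only
    rw [← Finset.sum_div, Finset.sum_sub_distrib, hp.2, hmsum]
    field_simp
    ring
  have hvsum : ∑ a, v a = 1 := by
    rw [hv]
    simp only
    rw [← Finset.sum_div, Finset.sum_sub_distrib, hp'.2, hmsum]
    field_simp
    ring
  have hwsum : ∑ a, w a = 1 := by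
    rw [hw]
    simp only
    rw [← Finset.sum_div, hmsum]
    field_simp
  have hpdec : ∀ a, p a = (1 - t) * w a + t * u a := by
    intro a; rw [hw, hu]; field_simp; ring
  have hpdec' : ∀ a, p' a = (1 - t) * w a + t * v a := by
    intro a; rw [hw, hv]; field_simp; ring
  -- Step A: almost convexity
  have stepA : ent p ≤ (1 - t) * ent w + t * ent u + binEnt t := by
    have hterm : ∀ a, negMulLog (p a) ≤
        ((1 - t) * negMulLog (w a) + w a * negMulLog (1 - t))
        + (t * negMulLog (u a) + u a * negMulLog t) := by
      intro a
      rw [hpdec a]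
      calc negMulLog ((1 - t) * w a + t * u a)
          ≤ negMulLog ((1 - t) * w a) + negMulLog (t * u a) :=
            eta_subadd (mul_nonneg (le_of_lt h1t) (hwnn a)) (mul_nonneg (le_of_lt h0) (hunn a))
        _ = ((1 - t) * negMulLog (w a) + w a * negMulLog (1 - t))
            + (t * negMulLog (u a) + u a * negMulLog t) := by
            rw [negMulLog_mul, negMulLog_mul]; ring
    calc ent p ≤ ∑ a, (((1 - t) * negMulLog (w a) + w a * negMulLog (1 - t))
        + (t * negMulLog (u a) + u a * negMulLog t)) :=
          Finset.sum_le_sum fun a _ => hterm a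
      _ = (1 - t) * ent w + t * ent u + binEnt t := by
          simp only [Finset.sum_add_distrib, ← Finset.mul_sum, ← Finset.sum_mul,
            husum, hwsum, ent, binEnt]
          ring
  -- Step B: concavity
  have stepB : (1 - t) * ent w + t * ent v ≤ ent p' := by
    have hterm : ∀ a, (1 - t) * negMulLog (w a) + t * negMulLog (v a) ≤ negMulLog (p' a) := by
      intro a
      rw [hpdec' a]
      have := Real.concaveOn_negMulLog.2 (Set.mem_Ici.mpr (hwnn a)) (Set.mem_Ici.mpr (hvnn a))
        (le_of_lt h1t) (le_of_lt h0) (by ring : (1 - t) + t = 1)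
      simpa [smul_eq_mul] using this
    calc (1 - t) * ent w + t * ent v
        = ∑ a, ((1 - t) * negMulLog (w a) + t * negMulLog (v a)) := by
          simp only [Finset.sum_add_distrib, ← Finset.mul_sum, ent]
      _ ≤ ∑ a, negMulLog (p' a) := Finset.sum_le_sum fun a _ => hterm a
      _ = ent p' := rfl
  have huP : IsProbDist u := ⟨hunn, husum⟩
  have hule : ent u ≤ Real.log (Fintype.card A) := ent_le_log_card huP
  have hvnn' : 0 ≤ ent v := ent_nonneg ⟨hvnn, hvsum⟩
  have h1 : t * ent u ≤ t * Real.log (Fintype.card A) :=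
    mul_le_mul_of_nonneg_left hule (le_of_lt h0)
  have h2 : 0 ≤ t * ent v := mul_nonneg (le_of_lt h0) hvnn'
  linarith

end AuxEntropy

/-- Shannon entropy is asymptotically continuous: if `(1/2)‖P − P'‖₁ ≤ ε ≤ 1`
then `|H(P) − H(P')| ≤ ε log |S| + h(ε)`. -/
theorem entropy_asymptotically_continuous
    {A : Type} [Fintype A] (hA : 2 ≤ Fintype.card A)
    (p p' : A → ℝ) (hp : IsProbDist p) (hp' : IsProbDist p')
    (ε : ℝ) (hε1 : (1 / 2) * ∑ a, |p a - p' a| ≤ ε) (hε2 : ε ≤ 1) :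
    |ent p - ent p'| ≤ ε * Real.log (Fintype.card A) + binEnt ε := by
  classical
  set d : ℝ := (Fintype.card A : ℝ) with hdd
  have hd : 1 ≤ d := card_pos_of_prob hp
  have hlogd : 0 ≤ Real.log d := Real.log_nonneg hd
  set t : ℝ := (1 / 2) * ∑ a, |p a - p' a| with htdef
  have ht0 : 0 ≤ t := by
    have : 0 ≤ ∑ a, |p a - p' a| := Finset.sum_nonneg fun a _ => abs_nonneg _
    rw [htdef]; linarith
  have hsymm : (1 / 2) * ∑ a, |p' a - p a| = t := by
    rw [htdef]
    congr 1
    exact Finset.sum_congr rfl fun a _ => abs_sub_comm _ _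
  have hcore : |ent p - ent p'| ≤ t * Real.log d + binEnt t := by
    rw [abs_sub_le_iff]
    constructor
    · exact fannes_one_sided p p' hp hp' t rfl
    · exact fannes_one_sided p' p hp' hp t hsymm.symm
  have htriv : |ent p - ent p'| ≤ Real.log d := by
    rw [abs_sub_le_iff]
    constructor
    · linarith [ent_le_log_card hp, ent_nonneg hp']
    · linarith [ent_le_log_card hp', ent_nonneg hp]
  have hb1 : binEnt 1 = 0 := by simp [binEnt]
  rcases eq_or_lt_of_le hε2 with he1 | he1
  · rw [he1, hb1, one_mul, add_zero]
    exact htriv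
  · -- ε < 1, hence t < 1; interpolate by concavity
    have ht1 : t < 1 := lt_of_le_of_lt hε1 he1
    have h1t : 0 < 1 - t := by linarith
    set lam : ℝ := (1 - ε) / (1 - t) with hlam
    set mu : ℝ := (ε - t) / (1 - t) with hmu
    have hlnn : 0 ≤ lam := div_nonneg (by linarith) (le_of_lt h1t)
    have hmnn : 0 ≤ mu := div_nonneg (by linarith) (le_of_lt h1t)
    have hsum1 : lam + mu = 1 := by rw [hlam, hmu]; field_simp; ring
    have heps : lam * t + mu * 1 = ε := by rw [hlam, hmu]; field_simp; ring
    have heps' : lam * (1 - t) + mu * 0 = 1 - ε := by rw [hlam]; field_simp; ring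
    have hc1 : lam * Real.negMulLog t + mu * Real.negMulLog 1 ≤ Real.negMulLog ε := by
      have := Real.concaveOn_negMulLog.2 (Set.mem_Ici.mpr ht0)
        (Set.mem_Ici.mpr zero_le_one) hlnn hmnn hsum1
      rw [smul_eq_mul, smul_eq_mul, smul_eq_mul, smul_eq_mul, heps] at this
      exact this
    have hc2 : lam * Real.negMulLog (1 - t) + mu * Real.negMulLog 0 ≤ Real.negMulLog (1 - ε) := by
      have := Real.concaveOn_negMulLog.2 (Set.mem_Ici.mpr (le_of_lt h1t))
        (Set.mem_Ici.mpr le_rfl) hlnn hmnn hsum1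
      rw [smul_eq_mul, smul_eq_mul, smul_eq_mul, smul_eq_mul, heps'] at this
      exact this
    have hbinEnt : lam * binEnt t ≤ binEnt ε := by
      simp only [Real.negMulLog_one, Real.negMulLog_zero, mul_zero, add_zero] at hc1 hc2
      simp only [binEnt]
      nlinarith
    have hmix : |ent p - ent p'| ≤ lam * (t * Real.log d + binEnt t) + mu * Real.log d := by
      have a1 := mul_le_mul_of_nonneg_left hcore hlnn
      have a2 := mul_le_mul_of_nonneg_left htriv hmnn
      nlinarith [abs_nonneg (ent p - ent p')]
    have hfinal : lam * (t * Real.log d + binEnt t) + mu * Real.log d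
        ≤ ε * Real.log d + binEnt ε := by
      have : lam * (t * Real.log d) + mu * Real.log d = ε * Real.log d := by
        rw [← heps]; ring
      nlinarith
    calc |ent p - ent p'| ≤ _ := hmix
      _ ≤ _ := hfinal
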